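/- arXiv:2307.01321 — 2 statements merged into one kernel-verified Lean document; each statement's English description precedes it below -/
import Mathlib

section
/- If N is a complete metric space, then the space of bounded Lipschitz jets J^b(M,p,N,q), i.e., jets at finite distance from the jet of the constant function x ↦ q, equipped with the jet distance, is a complete metric space. -/
open Filter Topology ENNReal

/-- Jet pseudo-distance: `limsup_{x → p, x ≠ p} d(f x, g x)/d(x,p)` in `[0,∞]`. -/
noncomputable def jetDist {M N : Type*} [MetricSpace M] [MetricSpace N]
    (p : M) (f g : M → N) : ℝ≥0∞ :=
  Filter.limsup (fun x => edist (f x) (g x) / edist x p) (𝓝[≠] p)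

lemma jetDist_comm {M N : Type*} [MetricSpace M] [MetricSpace N]
    (p : M) (f g : M → N) : jetDist p f g = jetDist p g f := by
  unfold jetDist; simp only [edist_comm]

lemma ennreal_limsup_add_le {ι : Type*} {f : Filter ι} (u v : ι → ℝ≥0∞) :
    Filter.limsup (fun x => u x + v x) f ≤ Filter.limsup u f + Filter.limsup v f := by
  by_cases hu : Filter.limsup u f = ⊤
  · rw [hu, top_add]; exact le_top
  by_cases hv : Filter.limsup v f = ⊤
  · rw [hv, add_top]; exact le_top
  refine ENNReal.le_of_forall_pos_le_add fun ε hε _ => ?_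
  have hε2 : (0 : ℝ≥0∞) < (ε : ℝ≥0∞) / 2 :=
    ENNReal.half_pos (by exact_mod_cast hε.ne')
  have h1 : ∀ᶠ x in f, u x < Filter.limsup u f + (ε : ℝ≥0∞) / 2 :=
    eventually_lt_of_limsup_lt (ENNReal.lt_add_right hu hε2.ne')
  have h2 : ∀ᶠ x in f, v x < Filter.limsup v f + (ε : ℝ≥0∞) / 2 :=
    eventually_lt_of_limsup_lt (ENNReal.lt_add_right hv hε2.ne')
  calc Filter.limsup (fun x => u x + v x) f
      ≤ Filter.limsup u f + (ε : ℝ≥0∞) / 2 + (Filter.limsup v f + (ε : ℝ≥0∞) / 2) := by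
        refine limsup_le_of_le (by isBoundedDefault) ?_
        filter_upwards [h1, h2] with x hx1 hx2
        exact add_le_add hx1.le hx2.le
    _ = Filter.limsup u f + Filter.limsup v f + ((ε : ℝ≥0∞) / 2 + (ε : ℝ≥0∞) / 2) := by
        ring
    _ = Filter.limsup u f + Filter.limsup v f + ε := by rw [ENNReal.add_halves]

lemma jetDist_triangle {M N : Type*} [MetricSpace M] [MetricSpace N]
    (p : M) (a b c : M → N) : jetDist p a c ≤ jetDist p a b + jetDist p b c := by
  unfold jetDist
  calc Filter.limsup (fun x => edist (a x) (c x) / edist x p) (𝓝[≠] p)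
      ≤ Filter.limsup ((fun x => edist (a x) (b x) / edist x p)
          + fun x => edist (b x) (c x) / edist x p) (𝓝[≠] p) := by
        refine limsup_le_limsup (Eventually.of_forall fun x => ?_)
        simp only [Pi.add_apply, ENNReal.div_add_div_same]
        gcongr
        exact edist_triangle _ _ _
    _ = Filter.limsup (fun x => edist (a x) (b x) / edist x p
          + edist (b x) (c x) / edist x p) (𝓝[≠] p) := rfl
    _ ≤ _ := ennreal_limsup_add_le _ _

lemma jetDist_le_of_forall {M N : Type*} [MetricSpace M] [MetricSpace N]
    {p : M} {f g : M → N} {r C : ℝ≥0∞} (hr : 0 < r)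
    (h : ∀ x, x ≠ p → edist x p < r → edist (f x) (g x) ≤ C * edist x p) :
    jetDist p f g ≤ C := by
  refine limsup_le_of_le (by isBoundedDefault) ?_
  have h1 : ∀ᶠ x in 𝓝[≠] p, edist x p < r :=
    nhdsWithin_le_nhds (EMetric.ball_mem_nhds p hr)
  have h2 : ∀ᶠ x in 𝓝[≠] p, x ≠ p := self_mem_nhdsWithin
  filter_upwards [h1, h2] with x hx hxp
  rw [ENNReal.div_le_iff ((edist_pos.2 hxp).ne') (edist_ne_top _ _)]
  exact h x hxp hx

lemma jetDist_extract {M N : Type*} [MetricSpace M] [MetricSpace N]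
    {p : M} {f g : M → N} {C : ℝ≥0∞} (h : jetDist p f g < C) :
    ∃ r : ℝ≥0∞, 0 < r ∧ ∀ x, x ≠ p → edist x p < r →
      edist (f x) (g x) ≤ C * edist x p := by
  have hev : ∀ᶠ x in 𝓝[≠] p, edist (f x) (g x) / edist x p < C :=
    eventually_lt_of_limsup_lt h
  rw [eventually_iff, EMetric.mem_nhdsWithin_iff] at hev
  obtain ⟨ε, hε, hsub⟩ := hev
  refine ⟨ε, hε, fun x hxp hx => ?_⟩
  have hmem : x ∈ EMetric.ball p ε ∩ {p}ᶜ := ⟨EMetric.mem_ball.2 hx, hxp⟩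
  have := hsub hmem
  simp only [Set.mem_setOf_eq] at this
  rw [ENNReal.div_lt_iff (Or.inl ((edist_pos.2 hxp).ne')) (Or.inl (edist_ne_top _ _))] at this
  exact this.le

/-- Completeness of the space of bounded Lipschitz jets `J^b(M,p,N,q)`: if `N` is a
complete metric space, then any sequence of bounded jets which is Cauchy for the jet
distance converges (in jet distance) to a bounded jet. -/
theorem bounded_jets_complete {M N : Type*} [MetricSpace M] [MetricSpace N]
    [CompleteSpace N] (p : M) (q : N)
    (f : ℕ → M → N) (hfq : ∀ n, f n p = q)
    (hbdd : ∀ n, jetDist p (f n) (fun _ => q) < ⊤)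
    (hcauchy : ∀ ε : ℝ≥0∞, 0 < ε → ∃ K : ℕ, ∀ m ≥ K, ∀ n ≥ K,
      jetDist p (f m) (f n) < ε) :
    ∃ g : M → N, g p = q ∧ jetDist p g (fun _ => q) < ⊤ ∧
      Tendsto (fun n => jetDist p (f n) g) atTop (𝓝 0) := by
  classical
  have h2 : (2 : ℝ≥0∞) * 2⁻¹ = 1 := ENNReal.mul_inv_cancel two_ne_zero ENNReal.ofNat_ne_top
  have hpowpos : ∀ k : ℕ, (0 : ℝ≥0∞) < 2⁻¹ ^ k :=
    fun k => ENNReal.pow_pos (ENNReal.inv_pos.2 ENNReal.ofNat_ne_top) k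
  -- Cauchy thresholds
  choose K hK using fun k : ℕ => hcauchy (2⁻¹ ^ k) (hpowpos k)
  -- subsequence
  obtain ⟨n, hn0, hnsucc⟩ : ∃ n : ℕ → ℕ, n 0 = K 0 ∧
      ∀ k, n (k + 1) = max (n k + 1) (K (k + 1)) :=
    ⟨fun k => Nat.rec (K 0) (fun k ih => max (ih + 1) (K (k + 1))) k, rfl, fun _ => rfl⟩
  have hnK : ∀ k, K k ≤ n k := by
    intro k
    cases k with
    | zero => rw [hn0]
    | succ k => rw [hnsucc]; exact le_max_right _ _
  have hstep : ∀ k, jetDist p (f (n k)) (f (n (k + 1))) < 2⁻¹ ^ k := by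
    intro k
    refine hK k _ (hnK k) _ ?_
    rw [hnsucc]
    exact le_trans (le_trans (hnK k) (Nat.le_succ _)) (le_max_left _ _)
  -- radii for consecutive differences
  choose r hrpos hrP using fun k => jetDist_extract (hstep k)
  -- radius for boundedness of f (n 0)
  set B := jetDist p (f (n 0)) (fun _ => q) with hBdef
  have hB : B < ⊤ := hbdd (n 0)
  obtain ⟨r', hr'pos, hr'P⟩ := jetDist_extract (ENNReal.lt_add_right hB.ne one_ne_zero)
  -- decreasing radii
  obtain ⟨s, hs0, hssucc⟩ : ∃ s : ℕ → ℝ≥0∞, s 0 = min (min (r 0) r') 1 ∧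
      ∀ k, s (k + 1) = min (s k) (min (r (k + 1)) ((k : ℝ≥0∞) + 2)⁻¹) :=
    ⟨fun k => Nat.rec (min (min (r 0) r') 1)
      (fun k ih => min ih (min (r (k + 1)) ((k : ℝ≥0∞) + 2)⁻¹)) k, rfl, fun _ => rfl⟩
  have hspos : ∀ k, 0 < s k := by
    intro k
    induction k with
    | zero => rw [hs0]; exact lt_min (lt_min (hrpos 0) hr'pos) one_pos
    | succ k ih =>
      rw [hssucc]
      refine lt_min ih (lt_min (hrpos _) (ENNReal.inv_pos.2 ?_))
      exact (ENNReal.add_lt_top.2 ⟨ENNReal.natCast_lt_top k, ENNReal.ofNat_lt_top⟩).ne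
  have hsdec : ∀ k, s (k + 1) ≤ s k := fun k => by rw [hssucc]; exact min_le_left _ _
  have hanti : Antitone s := antitone_nat_of_succ_le hsdec
  have hsr : ∀ k, s k ≤ r k := by
    intro k
    cases k with
    | zero => rw [hs0]; exact le_trans (min_le_left _ _) (min_le_left _ _)
    | succ k => rw [hssucc]; exact le_trans (min_le_right _ _) (min_le_left _ _)
  have hsr' : s 0 ≤ r' := by rw [hs0]; exact le_trans (min_le_left _ _) (min_le_right _ _)
  have hsle : ∀ k, s k ≤ ((k : ℝ≥0∞) + 1)⁻¹ := by
    intro k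
    cases k with
    | zero => rw [hs0]; simpa using min_le_right (min (r 0) r') 1
    | succ k =>
      rw [hssucc]
      refine le_trans (le_trans (min_le_right _ _) (min_le_right _ _)) (le_of_eq ?_)
      push_cast
      ring_nf
  -- existence of an index where the radius drops below edist x p
  have hex : ∀ x, x ≠ p → ∃ k, ¬ edist x p < s k := by
    intro x hx
    obtain ⟨k, hk⟩ := ENNReal.exists_inv_nat_lt ((edist_pos.2 hx).ne')
    refine ⟨k, not_lt.2 ?_⟩
    calc s k ≤ ((k : ℝ≥0∞) + 1)⁻¹ := hsle k
      _ ≤ ((k : ℝ≥0∞))⁻¹ := ENNReal.inv_le_inv.2 le_self_add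
      _ ≤ edist x p := hk.le
  -- glued limit function
  set g : M → N := fun x =>
    if hx : x = p then q else f (n (Nat.find (hex x hx) - 1)) x with hgdef
  have hgp : g p = q := dif_pos rfl
  -- index is greater than any j with edist x p < s j
  have hm_gt : ∀ x (hx : x ≠ p) (j : ℕ), edist x p < s j → j < Nat.find (hex x hx) := by
    exact fun x hx j hj => lt_of_not_ge fun hcon =>
      Nat.find_spec (hex x hx) (lt_of_lt_of_le hj (hanti hcon))
  -- key estimate by induction
  have key : ∀ t j x (hx : x ≠ p), Nat.find (hex x hx) ≤ j + t → edist x p < s j →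
      edist (f (n j) x) (g x) ≤ 2 * 2⁻¹ ^ j * edist x p := by
    intro t
    induction t with
    | zero =>
      intro j x hx hle hdx
      exact absurd (hm_gt x hx j hdx) (by omega)
    | succ t ih =>
      intro j x hx hle hdx
      have hjm : j < Nat.find (hex x hx) := hm_gt x hx j hdx
      by_cases hm1 : Nat.find (hex x hx) = j + 1
      · have hgx : g x = f (n j) x := by
          rw [hgdef]
          simp only [dif_neg hx, hm1, Nat.add_sub_cancel]
        rw [hgx, edist_self]
        exact zero_le
      · have hj1m : j + 1 < Nat.find (hex x hx) := by omega
        have hdx1 : edist x p < s (j + 1) := not_not.1 (Nat.find_min (hex x hx) hj1m)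
        have hIH : edist (f (n (j + 1)) x) (g x) ≤ 2 * 2⁻¹ ^ (j + 1) * edist x p :=
          ih (j + 1) x hx (by omega) hdx1
        have h1 : edist (f (n j) x) (f (n (j + 1)) x) ≤ 2⁻¹ ^ j * edist x p :=
          hrP j x hx (lt_of_lt_of_le hdx (hsr j))
        have h3 : 2 * (2⁻¹ : ℝ≥0∞) ^ (j + 1) = 2⁻¹ ^ j := by
          rw [pow_succ, mul_comm ((2⁻¹ : ℝ≥0∞) ^ j) 2⁻¹, ← mul_assoc, h2, one_mul]
        calc edist (f (n j) x) (g x)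
            ≤ edist (f (n j) x) (f (n (j + 1)) x) + edist (f (n (j + 1)) x) (g x) :=
              edist_triangle _ _ _
          _ ≤ 2⁻¹ ^ j * edist x p + 2 * 2⁻¹ ^ (j + 1) * edist x p := add_le_add h1 hIH
          _ = 2 * 2⁻¹ ^ j * edist x p := by rw [h3, ← two_mul, mul_assoc]
  -- jet distance from the subsequence to g
  have hjg : ∀ j, jetDist p (f (n j)) g ≤ 2 * 2⁻¹ ^ j := by
    intro j
    refine jetDist_le_of_forall (hspos j) fun x hx hdx => ?_
    exact key (Nat.find (hex x hx)) j x hx (Nat.le_add_left _ _) hdx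
  -- boundedness of g
  have hbound : jetDist p g (fun _ => q) < ⊤ := by
    have htri := jetDist_triangle p g (f (n 0)) (fun _ => q)
    have h1 : jetDist p g (f (n 0)) ≤ 2 := by
      rw [jetDist_comm]
      simpa using hjg 0
    refine lt_of_le_of_lt htri (lt_of_le_of_lt (add_le_add h1 le_rfl) ?_)
    exact ENNReal.add_lt_top.2 ⟨ENNReal.ofNat_lt_top, hB⟩
  refine ⟨g, hgp, hbound, ?_⟩
  -- convergence
  rw [ENNReal.tendsto_atTop_zero]
  intro ε hε
  obtain ⟨j, hj⟩ := ENNReal.exists_inv_two_pow_lt hε.ne'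
  refine ⟨K (j + 2), fun m hm => ?_⟩
  have h1 : jetDist p (f m) (f (n (j + 2))) < 2⁻¹ ^ (j + 2) :=
    hK (j + 2) m hm _ (hnK (j + 2))
  have h4 : (4 : ℝ≥0∞) * 2⁻¹ ^ 2 = 1 := by
    rw [sq, show (4 : ℝ≥0∞) = 2 * 2 by norm_num]
    calc (2 : ℝ≥0∞) * 2 * (2⁻¹ * 2⁻¹) = 2 * 2⁻¹ * (2 * 2⁻¹) := by ring
      _ = 1 := by rw [h2, one_mul]
  calc jetDist p (f m) g
      ≤ jetDist p (f m) (f (n (j + 2))) + jetDist p (f (n (j + 2))) g :=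
        jetDist_triangle _ _ _ _
    _ ≤ 2⁻¹ ^ (j + 2) + 2 * 2⁻¹ ^ (j + 2) := add_le_add h1.le (hjg _)
    _ = 3 * 2⁻¹ ^ (j + 2) := by ring
    _ ≤ 4 * 2⁻¹ ^ (j + 2) := by gcongr <;> norm_num
    _ = 2⁻¹ ^ j := by
        rw [pow_add, mul_comm ((2⁻¹ : ℝ≥0∞) ^ j), ← mul_assoc, h4, one_mul]
    _ ≤ ε := hj.le
end

section
/- The norm of an oblique projection is bounded by the reciprocal of the sine of the angle between its range's complement and kernel: if V is a finite-dimensional inner product space, E and D are complementary subspaces, then the projection p^E_D onto D along E satisfies ‖p^E_D‖ ≤ 1/sin(θ), where θ is the minimal angle between E and D, i.e., sin(θ) = min over unit vectors e ∈ E, of the distance from e to D (equivalently the minimal principal angle). -/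
open Metric Submodule

/-- The norm of an oblique projection is bounded by the reciprocal of the sine of the
minimal angle between its kernel `E` and its range `D`, where
`sin θ = inf { dist(e, D) : e ∈ E, ‖e‖ = 1 }`. -/
theorem oblique_proj_norm_le {V : Type*} [NormedAddCommGroup V]
    [InnerProductSpace ℝ V] [FiniteDimensional ℝ V]
    (E D : Submodule ℝ V) (h : IsCompl D E) (hE : E ≠ ⊥)
    (s : ℝ)
    (hs : s = sInf ((fun e => Metric.infDist e (D : Set V)) '' {e : V | e ∈ E ∧ ‖e‖ = 1})) :
    ‖LinearMap.toContinuousLinearMap (D.subtype ∘ₗ D.linearProjOfIsCompl E h)‖ ≤ 1 / s := by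
  set S : Set V := {e : V | e ∈ E ∧ ‖e‖ = 1} with hS
  have hDclosed : IsClosed (D : Set V) := D.closed_of_finiteDimensional
  have hScomp : IsCompact S := by
    have hEq : S = (E : Set V) ∩ Metric.sphere 0 1 := by
      ext x
      simp [hS, mem_sphere_iff_norm, sub_zero, and_comm]
    rw [hEq]
    exact (isCompact_sphere 0 1).inter_left E.closed_of_finiteDimensional
  have hSne : S.Nonempty := by
    obtain ⟨x, hxE, hx0⟩ := Submodule.exists_mem_ne_zero_of_ne_bot hE
    refine ⟨‖x‖⁻¹ • x, E.smul_mem _ hxE, ?_⟩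
    rw [norm_smul, norm_inv, norm_norm]
    field_simp [norm_ne_zero_iff.mpr hx0]
  have hbdd : BddBelow ((fun e => Metric.infDist e (D : Set V)) '' S) := by
    refine ⟨0, fun y hy => ?_⟩
    obtain ⟨x, _, rfl⟩ := hy
    exact Metric.infDist_nonneg
  obtain ⟨e₀, he₀S, he₀⟩ := hScomp.exists_sInf_image_eq hSne
    ((Metric.continuous_infDist_pt (D : Set V)).continuousOn)
  have hspos : 0 < s := by
    rw [hs, he₀]
    refine (hDclosed.notMem_iff_infDist_pos ⟨0, D.zero_mem⟩).1 ?_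
    intro hmem
    have : e₀ ∈ D ⊓ E := ⟨hmem, he₀S.1⟩
    rw [h.inf_eq_bot, Submodule.mem_bot] at this
    rw [this] at he₀S
    simp [hS] at he₀S
  have hs1 : s ≤ 1 := by
    rw [hs, he₀]
    calc Metric.infDist e₀ (D : Set V) ≤ dist e₀ 0 :=
          Metric.infDist_le_dist_of_mem D.zero_mem
      _ = 1 := by rw [dist_zero_right, he₀S.2]
  -- key inequality
  have key : ∀ d ∈ D, ∀ e ∈ E, s * ‖d‖ ≤ ‖d + e‖ := by
    intro d hd e he
    rcases eq_or_ne d 0 with rfl | hd0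
    · simpa using mul_nonneg hspos.le (norm_nonneg _)
    rcases eq_or_ne e 0 with rfl | he0
    · rw [add_zero]
      nlinarith [norm_nonneg d]
    set a : ℝ := ‖d‖ with ha
    set b : ℝ := ‖e‖ with hb
    have ha0 : 0 < a := norm_pos_iff.mpr hd0
    have hb0 : 0 < b := norm_pos_iff.mpr he0
    set u : V := b⁻¹ • e with hu
    have huE : u ∈ E := E.smul_mem _ he
    have hun : ‖u‖ = 1 := by
      rw [hu, norm_smul, norm_inv, norm_norm, ← hb]
      field_simp
    set p : ℝ := inner ℝ u d with hp
    set t : ℝ := p / a ^ 2 with ht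
    have hsu : s ≤ Metric.infDist u (D : Set V) := by
      rw [hs]
      exact csInf_le hbdd ⟨u, ⟨huE, hun⟩, rfl⟩
    have hud : Metric.infDist u (D : Set V) ≤ ‖u - t • d‖ := by
      rw [← dist_eq_norm]
      exact Metric.infDist_le_dist_of_mem (D.smul_mem t hd)
    have hsx : s ≤ ‖u - t • d‖ := hsu.trans hud
    have hx2 : ‖u - t • d‖ ^ 2 = 1 - p ^ 2 / a ^ 2 := by
      rw [@norm_sub_sq_real, hun, real_inner_smul_right, norm_smul, ← hp, ht]
      rw [Real.norm_eq_abs, mul_pow, sq_abs, ← ha]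
      field_simp
      ring
    have hpq : inner ℝ u d = b⁻¹ * (inner ℝ e d : ℝ) := by
      rw [hu, real_inner_smul_left]
    set q : ℝ := inner ℝ e d with hq
    have hN : ‖d + e‖ ^ 2 = a ^ 2 + 2 * q + b ^ 2 := by
      rw [@norm_add_sq_real, ← ha, ← hb, real_inner_comm, ← hq]
      try ring
    have hs2 : s ^ 2 ≤ 1 - p ^ 2 / a ^ 2 := by
      rw [← hx2]
      exact pow_le_pow_left₀ hspos.le hsx 2
    have hkey2 : (s * a) ^ 2 ≤ ‖d + e‖ ^ 2 := by
      rw [hN]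
      have hbp : p = b⁻¹ * q := by rw [hp, hpq]
      have hsq : (q / b + b) ^ 2 ≥ 0 := sq_nonneg _
      have h1 : s ^ 2 * a ^ 2 ≤ a ^ 2 - p ^ 2 := by
        have := mul_le_mul_of_nonneg_right hs2 (sq_nonneg a)
        calc s ^ 2 * a ^ 2 ≤ (1 - p ^ 2 / a ^ 2) * a ^ 2 := this
          _ = a ^ 2 - p ^ 2 := by field_simp
      have h2 : p ^ 2 = q ^ 2 / b ^ 2 := by rw [hbp]; field_simp; try ring
      have h3 : q ^ 2 / b ^ 2 + 2 * q + b ^ 2 ≥ 0 := by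
        have : (q / b + b) ^ 2 = q ^ 2 / b ^ 2 + 2 * q + b ^ 2 := by
          field_simp; ring
        linarith [sq_nonneg (q / b + b)]
      nlinarith
    exact le_of_pow_le_pow_left₀ two_ne_zero (norm_nonneg _)
      (by rw [mul_pow] at hkey2 ⊢; simpa using hkey2)
  refine ContinuousLinearMap.opNorm_le_bound _ (by positivity) fun v => ?_
  have hTv : (LinearMap.toContinuousLinearMap (D.subtype ∘ₗ D.linearProjOfIsCompl E h)) v
      = ((D.linearProjOfIsCompl E h v : V)) := rfl
  set d : V := (D.linearProjOfIsCompl E h v : V) with hd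
  have hdD : d ∈ D := (D.linearProjOfIsCompl E h v).2
  have heE : v - d ∈ E := by
    rw [← Submodule.linearProjOfIsCompl_apply_eq_zero_iff (p := D) (q := E) h]
    have : D.projectionOnto E h d = D.projectionOnto E h v := by
      rw [hd]
      exact Submodule.projectionOnto_apply_left h _
    rw [map_sub, this, sub_self]
  have hsum : d + (v - d) = v := by abel
  have := key d hdD (v - d) heE
  rw [hsum] at this
  rw [hTv, one_div, inv_mul_eq_div, le_div_iff₀ hspos, mul_comm]
  exact this
end
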